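/- In any group, suppose elements b₁, b₂, b₃ satisfy Br⁵(b₂,b₃) and Co(b₁, b₂^{b₃b₂}). Then the braid relation Br(b₁, b₃^{b₂}) (i.e., b₁ and b₂⁻¹b₃b₂ satisfy aba = bab) holds if and only if Br(b₁^{b₃}, b₂) holds. -/
import Mathlib


theorem type_IV_br_relation_equiv {G : Type*} [Group G] (b₁ b₂ b₃ : G)
    (hbr5 : b₂ * b₃ * b₂ * b₃ * b₂ = b₃ * b₂ * b₃ * b₂ * b₃)
    (hco : b₁ * ((b₃ * b₂)⁻¹ * b₂ * (b₃ * b₂)) = ((b₃ * b₂)⁻¹ * b₂ * (b₃ * b₂)) * b₁) :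
    (b₁ * (b₂⁻¹ * b₃ * b₂) * b₁ = (b₂⁻¹ * b₃ * b₂) * b₁ * (b₂⁻¹ * b₃ * b₂)) ↔
      ((b₃⁻¹ * b₁ * b₃) * b₂ * (b₃⁻¹ * b₁ * b₃) = b₂ * (b₃⁻¹ * b₁ * b₃) * b₂) := by
  set z : G := b₂⁻¹ * b₃⁻¹ * b₂ * b₃ * b₂ with hzdef
  have conj : ∀ g x y : G, (x * y * x = y * x * y) ↔
      (g⁻¹ * x * g) * (g⁻¹ * y * g) * (g⁻¹ * x * g)
        = (g⁻¹ * y * g) * (g⁻¹ * x * g) * (g⁻¹ * y * g) := fun g x y => by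
    rw [show (g⁻¹ * x * g) * (g⁻¹ * y * g) * (g⁻¹ * x * g) = g⁻¹ * (x * y * x) * g by group,
        show (g⁻¹ * y * g) * (g⁻¹ * x * g) * (g⁻¹ * y * g) = g⁻¹ * (y * x * y) * g by group,
       ]
    exact ⟨fun h => by rw [h], fun h => mul_left_cancel (mul_right_cancel h)⟩
  have hzc : b₁ * z = z * b₁ := by
    rw [show z = (b₃ * b₂)⁻¹ * b₂ * (b₃ * b₂) by rw [hzdef]; group]
    exact hco
  have hz : z⁻¹ * b₁ * z = b₁ := by
    rw [mul_assoc, hzc, ← mul_assoc, inv_mul_cancel, one_mul]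
  have h1 : (b₂⁻¹ * b₃ * b₂) * z = b₃ * b₂ := by rw [hzdef]; group
  have h2 : z * (b₃ * b₂ * b₃⁻¹) = b₃ * b₂ := by
    rw [show z * (b₃ * b₂ * b₃⁻¹) = b₂⁻¹ * b₃⁻¹ * (b₂ * b₃ * b₂ * b₃ * b₂) * b₃⁻¹ by
      rw [hzdef]; group, hbr5]
    group
  have key : z⁻¹ * (b₂⁻¹ * b₃ * b₂) * z = b₃ * b₂ * b₃⁻¹ := by
    have h3 : b₂⁻¹ * b₃ * b₂ * z = z * (b₃ * b₂ * b₃⁻¹) := h1.trans h2.symm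
    rw [mul_assoc, h3, ← mul_assoc, inv_mul_cancel, one_mul]
  have key2 : b₃⁻¹ * (b₃ * b₂ * b₃⁻¹) * b₃ = b₂ := by group
  rw [conj z b₁ (b₂⁻¹ * b₃ * b₂), hz, key, conj b₃ b₁ (b₃ * b₂ * b₃⁻¹), key2]
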